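/- Let X and Y be Banach spaces, A ⊆ X an open subset, W ⊆ X a finite-dimensional subspace, K ⊆ W ∩ A a compact subset, and F ∈ C¹(A,Y). Let Q_N : Y → Y (N ∈ ℕ) be bounded linear maps satisfying the Hypothesis with respect to W and K. Then s_N := sup_{ξ ∈ K} ‖(I_Y − Q_N) ∘ F'(ξ)‖_{W → Y} (the operator norm of the restriction to W) tends to 0 as N → ∞. -/

import Mathlib

open Filter Topology

/-- Uniform convergence to zero on a compact set for a uniformly bounded sequence of
continuous linear maps converging pointwise to zero on the set. -/
lemma key_uniform {Y : Type*} [NormedAddCommGroup Y] [NormedSpace ℝ Y]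
    (T : ℕ → Y →L[ℝ] Y) (E : ℝ) (hT : ∀ N, ‖T N‖ ≤ E)
    (C : Set Y) (hC : IsCompact C)
    (hconv : ∀ y ∈ C, Tendsto (fun N => T N y) atTop (𝓝 0))
    (ε : ℝ) (hε : 0 < ε) : ∃ N₀, ∀ N ≥ N₀, ∀ y ∈ C, ‖T N y‖ ≤ ε := by
  have hE : 0 ≤ E := le_trans (norm_nonneg _) (hT 0)
  set r : ℝ := ε / (2 * (E + 1)) with hr
  have hrpos : 0 < r := div_pos hε (by positivity)
  obtain ⟨t, htC, hcover⟩ := hC.elim_nhds_subcover (fun y => Metric.ball y r)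
    (fun x _ => Metric.ball_mem_nhds x hrpos)
  -- for each center, pick a threshold
  have hsel : ∀ x ∈ t, ∃ Nx : ℕ, ∀ N ≥ Nx, ‖T N x‖ ≤ ε / 2 := by
    intro x hx
    have := (hconv x (htC x hx)).norm
    rw [norm_zero] at this
    have := (this.eventually_le_const (by linarith : (0:ℝ) < ε / 2)).exists_forall_of_atTop
    obtain ⟨N₀, hN₀⟩ := this
    exact ⟨N₀, fun N hN => hN₀ N hN⟩
  classical
  choose! Nsel hNsel using hsel
  refine ⟨t.sup Nsel, fun N hN y hy => ?_⟩
  obtain ⟨x, hxt, hyx⟩ := Set.mem_iUnion₂.mp (hcover hy)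
  have hdist : ‖y - x‖ < r := by
    rw [← dist_eq_norm]; exact hyx
  have h1 : ‖T N (y - x)‖ ≤ E * r := by
    calc ‖T N (y - x)‖ ≤ ‖T N‖ * ‖y - x‖ := (T N).le_opNorm _
    _ ≤ E * r := mul_le_mul (hT N) hdist.le (norm_nonneg _) hE
  have h2 : ‖T N x‖ ≤ ε / 2 := hNsel x hxt N (le_trans (Finset.le_sup hxt) hN)
  have h3 : E * r ≤ ε / 2 := by
    have h4 : E * r ≤ (E + 1) * r :=
      mul_le_mul_of_nonneg_right (by linarith) hrpos.le
    have h5 : (E + 1) * r = ε / 2 := by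
      rw [hr]; field_simp
    linarith
  calc ‖T N y‖ = ‖T N (y - x) + T N x‖ := by rw [← map_add, sub_add_cancel]
  _ ≤ ‖T N (y - x)‖ + ‖T N x‖ := norm_add_le _ _
  _ ≤ ε / 2 + ε / 2 := add_le_add (le_trans h1 h3) h2
  _ = ε := by ring

set_option maxHeartbeats 1000000 in
set_option synthInstance.maxHeartbeats 400000 in
/-- Theorem `theo:main`, part (i): under Hypothesis 2.2, if `W` is
finite-dimensional, then `s_N = sup_{ξ ∈ K} ‖(I_Y - Q_N) F'(ξ)‖_{W → Y} → 0`. -/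
theorem sN_tendsto_zero
    {X Y : Type*} [NormedAddCommGroup X] [NormedSpace ℝ X] [CompleteSpace X]
    [NormedAddCommGroup Y] [NormedSpace ℝ Y] [CompleteSpace Y]
    (A : Set X) (hA : IsOpen A)
    (W : Submodule ℝ X) [FiniteDimensional ℝ W]
    (K : Set X) (hKWA : K ⊆ (W : Set X) ∩ A) (hKcomp : IsCompact K)
    (F : X → Y) (F' : X → X →L[ℝ] Y)
    (hF : ∀ x ∈ A, HasFDerivAt F (F' x) x)
    (hF'cont : ContinuousOn F' A)
    (Q : ℕ → Y →L[ℝ] Y)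
    -- Hypothesis 2.2: there is a subspace Ỹ ⊆ Y such that
    (Ytil : Submodule ℝ Y)
    -- (a) for every ξ ∈ K, the range of F'(ξ)|_W is contained in Ỹ;
    (ha : ∀ ξ ∈ K, ∀ w ∈ W, F' ξ w ∈ Ytil)
    -- (b) ‖Q_N‖ ≤ D for some D ≥ 1;
    (D : ℝ) (hD : 1 ≤ D) (hb : ∀ N, ‖Q N‖ ≤ D)
    -- (c) Q_N → I strongly on Ỹ.
    (hc : ∀ y ∈ Ytil, Tendsto (fun N => Q N y) atTop (𝓝 y)) :
    Tendsto
      (fun N => ⨆ ξ : K,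
        ‖(ContinuousLinearMap.id ℝ Y - Q N).comp ((F' ξ).comp W.subtypeL)‖)
      atTop (𝓝 0) := by
  rcases Set.eq_empty_or_nonempty K with hKe | hKne
  · have : ∀ N, (⨆ ξ : K,
        ‖(ContinuousLinearMap.id ℝ Y - Q N).comp ((F' ξ).comp W.subtypeL)‖) = 0 := by
      intro N
      haveI : IsEmpty K := by rw [hKe]; exact Set.isEmpty_coe_sort.mpr rfl
      exact Real.iSup_of_isEmpty _
    simp only [this]
    exact tendsto_const_nhds
  -- the compact set C of relevant values
  set C : Set Y := (fun p : X × W => F' p.1 (p.2 : X)) '' (K ×ˢ Metric.closedBall (0 : W) 1)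
    with hCdef
  have hCcomp : IsCompact C := by
    apply IsCompact.image_of_continuousOn (hKcomp.prod (isCompact_closedBall _ _))
    have h1 : ContinuousOn (fun p : X × W => (F' p.1, (p.2 : X)))
        (K ×ˢ Metric.closedBall (0 : W) 1) := by
      refine ContinuousOn.prodMk ?_ ?_
      · exact (hF'cont.mono (fun x hx => (hKWA hx).2)).comp continuousOn_fst
          (fun p hp => hp.1)
      · exact (continuous_subtype_val.comp continuous_snd).continuousOn
    exact isBoundedBilinearMap_apply.continuous.comp_continuousOn h1
  have hCsub : ∀ y ∈ C, y ∈ Ytil := by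
    rintro y ⟨⟨ξ, w⟩, ⟨hξ, _⟩, rfl⟩
    exact ha ξ hξ (w : X) w.2
  -- the operators
  set T : ℕ → Y →L[ℝ] Y := fun N => ContinuousLinearMap.id ℝ Y - Q N with hTdef
  have hTnorm : ∀ N, ‖T N‖ ≤ 1 + D := by
    intro N
    calc ‖T N‖ ≤ ‖ContinuousLinearMap.id ℝ Y‖ + ‖Q N‖ := norm_sub_le _ _
    _ ≤ 1 + D := add_le_add ContinuousLinearMap.norm_id_le (hb N)
  have hTconv : ∀ y ∈ C, Tendsto (fun N => T N y) atTop (𝓝 0) := by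
    intro y hy
    have : Tendsto (fun N => y - Q N y) atTop (𝓝 (y - y)) :=
      tendsto_const_nhds.sub (hc y (hCsub y hy))
    simpa [hTdef] using this
  rw [Metric.tendsto_atTop]
  intro ε hε
  obtain ⟨N₀, hN₀⟩ := key_uniform T (1 + D) hTnorm C hCcomp hTconv (ε / 2) (by linarith)
  refine ⟨N₀, fun N hN => ?_⟩
  have hbound : ∀ ξ : K,
      ‖(ContinuousLinearMap.id ℝ Y - Q N).comp ((F' ξ).comp W.subtypeL)‖ ≤ ε / 2 := by
    intro ξ
    apply ContinuousLinearMap.opNorm_le_bound' _ (by linarith)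
    intro w hw
    have hwpos : 0 < ‖w‖ := lt_of_le_of_ne (norm_nonneg _) (Ne.symm hw)
    set u : W := ‖w‖⁻¹ • w with hu
    have hunorm : ‖u‖ = 1 := by
      rw [hu, norm_smul, norm_inv, norm_norm, inv_mul_cancel₀ (ne_of_gt hwpos)]
    have huball : u ∈ Metric.closedBall (0 : W) 1 := by
      rw [Metric.mem_closedBall, dist_zero_right, hunorm]
    have huC : F' (ξ : X) (u : X) ∈ C := ⟨((ξ : X), u), ⟨ξ.2, huball⟩, rfl⟩
    have hkey : ‖T N (F' (ξ : X) (u : X))‖ ≤ ε / 2 := hN₀ N hN _ huC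
    have hsmul : (w : X) = ‖w‖ • (u : X) := by
      have hcoe : ‖(w : X)‖ = ‖w‖ := rfl
      rw [hu]
      push_cast
      rw [smul_smul, mul_inv_cancel₀ (ne_of_gt hwpos), one_smul]
    calc ‖(ContinuousLinearMap.id ℝ Y - Q N).comp ((F' ξ).comp W.subtypeL) w‖
        = ‖T N (F' (ξ : X) (w : X))‖ := rfl
      _ = ‖T N (F' (ξ : X) (‖w‖ • (u : X)))‖ := by rw [← hsmul]
      _ = ‖w‖ * ‖T N (F' (ξ : X) (u : X))‖ := by
          rw [map_smul, map_smul, norm_smul, Real.norm_eq_abs, abs_of_pos hwpos]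
      _ ≤ ‖w‖ * (ε / 2) := by
          exact mul_le_mul_of_nonneg_left hkey (norm_nonneg _)
      _ = ε / 2 * ‖w‖ := by ring
  haveI : Nonempty K := hKne.to_subtype
  have hsup_le : (⨆ ξ : K,
      ‖(ContinuousLinearMap.id ℝ Y - Q N).comp ((F' ξ).comp W.subtypeL)‖) ≤ ε / 2 :=
    ciSup_le hbound
  have hsup_nonneg : 0 ≤ ⨆ ξ : K,
      ‖(ContinuousLinearMap.id ℝ Y - Q N).comp ((F' ξ).comp W.subtypeL)‖ :=
    Real.iSup_nonneg (fun ξ => ContinuousLinearMap.opNorm_nonneg _)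
  rw [Real.dist_eq, sub_zero, abs_of_nonneg hsup_nonneg]
  linarith
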